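/- Let x = α₁…αₜ be a word over {a,b} with all prefixes of nonnegative φ-value, where φ(a)=2, φ(b)=−2. If x′ is obtained from x by any finite sequence of type 1 operations (delete an a and a later b) and type 2 operations (swap adjacent letters α_iα_{i+1} with α_i = a or α_{i+1} = b), then w(x′) ≤ w(x). -/

import Mathlib

/-- A word over the alphabet {a,b} is a list of booleans: `true` = a, `false` = b. -/
abbrev Word := List Bool

/-- φ(a) = 2, φ(b) = -2, extended additively to words. -/
def phi (y : Word) : ℤ := (y.map (fun c => if c then (2 : ℤ) else -2)).sum

/-- The width of a word: the sum of φ over all nonempty prefixes. -/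
def wd (y : Word) : ℤ := ∑ i ∈ Finset.range y.length, phi (y.take (i + 1))

/-- A type 1 operation: delete an occurrence of a and a strictly later occurrence of b. -/
def Type1 (y y' : Word) : Prop :=
  ∃ u v z : Word, y = u ++ [true] ++ v ++ [false] ++ z ∧ y' = u ++ v ++ z

/-- A type 2 operation: swap two adjacent letters αᵢαᵢ₊₁ with αᵢ = a or αᵢ₊₁ = b. -/
def Type2 (y y' : Word) : Prop :=
  ∃ (u v : Word) (c d : Bool), (c = true ∨ d = false) ∧
    y = u ++ [c, d] ++ v ∧ y' = u ++ [d, c] ++ v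

/-- Auxiliary potential: sum over nonempty prefixes of `max (c + phi prefix) 0`. -/
def F (c : ℤ) (w : Word) : ℤ := ∑ j ∈ Finset.range w.length, max (c + phi (w.take (j + 1))) 0

lemma phi_append (u v : Word) : phi (u ++ v) = phi u + phi v := by simp [phi]

lemma phi_true : phi [true] = 2 := by simp [phi]

lemma phi_false : phi [false] = -2 := by simp [phi]

lemma F_append (c : ℤ) (u w : Word) : F c (u ++ w) = F c u + F (c + phi u) w := by
  unfold F
  rw [List.length_append, Finset.sum_range_add]
  congr 1
  · apply Finset.sum_congr rfl
    intro i hi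
    rw [Finset.mem_range] at hi
    rw [List.take_append_of_le_length (by omega)]
  · apply Finset.sum_congr rfl
    intro j _
    have h1 : u.length + j + 1 = u.length + (j + 1) := by omega
    rw [h1, List.take_length_add_append, phi_append]
    ring_nf

lemma F_single (c : ℤ) (d : Bool) : F c [d] = max (c + (if d then (2:ℤ) else -2)) 0 := by
  simp [F, phi]

lemma F_mono {c₁ c₂ : ℤ} (h : c₁ ≤ c₂) (w : Word) : F c₁ w ≤ F c₂ w := by
  apply Finset.sum_le_sum
  intro j _
  exact max_le_max (by omega) le_rfl

lemma step1 {y y' : Word} (h : Type1 y y') : F 0 y' ≤ F 0 y := by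
  obtain ⟨u, v, z, rfl, rfl⟩ := h
  simp only [F_append, F_single, phi_append, phi_true, phi_false]
  norm_num
  ring_nf
  have h1 : F (phi u) v ≤ F (2 + phi u) v := F_mono (by omega) v
  have h2 : (0:ℤ) ≤ max (2 + phi u) 0 := le_max_right _ _
  have h3 : (0:ℤ) ≤ max (phi u + phi v) 0 := le_max_right _ _
  linarith

lemma step2 {y y' : Word} (h : Type2 y y') : F 0 y' ≤ F 0 y := by
  obtain ⟨u, v, c, d, hcd, rfl, rfl⟩ := h
  have h2 : ∀ (e f : Bool) (k : ℤ), F k [e, f]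
      = max (k + (if e then (2:ℤ) else -2)) 0
        + max (k + (if e then (2:ℤ) else -2) + (if f then (2:ℤ) else -2)) 0 := by
    intro e f k
    simp [F, Finset.sum_range_succ, phi]
    ring_nf
  have hphi : ∀ e f : Bool, phi [e, f]
      = (if e then (2:ℤ) else -2) + (if f then (2:ℤ) else -2) := by
    intro e f; simp [phi]
  simp only [F_append, phi_append, h2, hphi]
  have hle : (if d then (2:ℤ) else -2) ≤ (if c then (2:ℤ) else -2) := by
    rcases hcd with rfl | rfl
    · cases d <;> norm_num
    · cases c <;> norm_num
  have e1 : max (0 + phi u + (if d then (2:ℤ) else -2)) 0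
      ≤ max (0 + phi u + (if c then (2:ℤ) else -2)) 0 :=
    max_le_max (by omega) le_rfl
  have e2 : max (0 + phi u + (if d then (2:ℤ) else -2) + (if c then (2:ℤ) else -2)) 0
      = max (0 + phi u + (if c then (2:ℤ) else -2) + (if d then (2:ℤ) else -2)) 0 := by
    ring_nf
  have e3 : F (0 + (phi u + ((if d then (2:ℤ) else -2) + (if c then (2:ℤ) else -2)))) v
      = F (0 + (phi u + ((if c then (2:ℤ) else -2) + (if d then (2:ℤ) else -2)))) v := by
    ring_nf
  linarith [e2.le, e2.ge, e3.le, e3.ge]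

lemma wd_le_F (y : Word) : wd y ≤ F 0 y := by
  apply Finset.sum_le_sum
  intro j _
  have := le_max_left (0 + phi (y.take (j + 1))) 0
  omega

theorem operations_monotone (x x' : Word)
    (hpre : ∀ i, 0 ≤ phi (x.take i))
    (h : Relation.ReflTransGen (fun y y' => Type1 y y' ∨ Type2 y y') x x') :
    wd x' ≤ wd x := by
  have hF : F 0 x' ≤ F 0 x := by
    induction h with
    | refl => exact le_rfl
    | tail _ hstep ih =>
      rcases hstep with h1 | h2
      · exact le_trans (step1 h1) ih
      · exact le_trans (step2 h2) ih
  have hx : wd x = F 0 x := by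
    unfold wd F
    apply Finset.sum_congr rfl
    intro i _
    have := hpre (i + 1)
    omega
  calc wd x' ≤ F 0 x' := wd_le_F x'
    _ ≤ F 0 x := hF
    _ = wd x := hx.symm
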